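/- Let F ∈ F̃^k be a minimal spanning entering forest with k trees and suppose F^{k−1} ≠ ∅. Then φ^{k−1} − φ^k = min_{l ∈ K_F} ( λ°_{V(T^F_l)} − λ^•_{V(T^F_l)} ). -/

import Mathlib

open scoped Classical

namespace BarrierForests

variable {α : Type*} [Fintype α] [DecidableEq α]

/-- Total weight of a set of arcs. -/
def aweight (v : α → α → ℝ) (A : Finset (α × α)) : ℝ := ∑ a ∈ A, v a.1 a.2

/-- Weight `Υ^A_S` of the arcs of `A` whose tail lies in `S`. -/
def aweightOn (v : α → α → ℝ) (A : Finset (α × α)) (S : Finset α) : ℝ :=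
  ∑ a ∈ A.filter (fun a => a.1 ∈ S), v a.1 a.2

/-- The relation "there is an arc from `i` to `j` in `A`". -/
def arcRel (A : Finset (α × α)) : α → α → Prop := fun i j => (i, j) ∈ A

/-- Entering forest: every vertex has out-degree at most one, and there are no
directed cycles. -/
def IsEForest (A : Finset (α × α)) : Prop :=
  (∀ i j j', (i, j) ∈ A → (i, j') ∈ A → j = j') ∧
  ∀ i, ¬ Relation.TransGen (arcRel A) i i

/-- Roots of a (spanning) entering forest: the vertices with no outgoing arc. -/
noncomputable def rootSet (A : Finset (α × α)) : Finset α :=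
  Finset.univ.filter fun i => ∀ j, (i, j) ∉ A

/-- `𝓕^k`: spanning entering forests of the digraph with arc set `E`
having exactly `k` trees (equivalently, `k` roots). -/
def FSet (E : Finset (α × α)) (k : ℕ) : Set (Finset (α × α)) :=
  {A | A ⊆ E ∧ IsEForest A ∧ (rootSet A).card = k}

/-- The infimum (in `EReal`, so `⊤` for the empty family) of the `w`-weights of the
members of `s`. -/
noncomputable def minW {β : Type*} (s : Set β) (w : β → ℝ) : EReal :=
  sInf ((fun x => (w x : EReal)) '' s)

/-- `φ^k`: minimum weight of a spanning entering forest with `k` trees. -/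
noncomputable def phi (v : α → α → ℝ) (E : Finset (α × α)) (k : ℕ) : EReal :=
  minW (FSet E k) (aweight v)

/-- `F ∈ 𝓕̃^k`: minimal spanning entering forest with `k` trees. -/
def IsMinForest (v : α → α → ℝ) (E : Finset (α × α)) (k : ℕ) (F : Finset (α × α)) : Prop :=
  F ∈ FSet E k ∧ (aweight v F : EReal) = phi v E k

/-- Vertex set of the tree `T^F_i` of the entering forest `F` rooted at `i`:
all vertices from which `i` is reachable. -/
noncomputable def treeVerts (F : Finset (α × α)) (i : α) : Finset α :=
  Finset.univ.filter fun j => Relation.ReflTransGen (arcRel F) j i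

/-- Arc set of the tree `T^F_i`. -/
noncomputable def treeArcs (F : Finset (α × α)) (i : α) : Finset (α × α) :=
  F.filter fun a => a.1 ∈ treeVerts F i

/-- Induced subgraph (restriction) of the arc set `A` on the vertex set `S`. -/
def restrictArcs (A : Finset (α × α)) (S : Finset α) : Finset (α × α) :=
  A.filter fun a => a.1 ∈ S ∧ a.2 ∈ S

/-- `T ∈ 𝓣^{•q}_S`: `T` is an entering tree that is a subgraph of the digraph with
arc set `E`, with vertex set `S` and root `q`. -/
def IsTreeOn (E T : Finset (α × α)) (S : Finset α) (q : α) : Prop :=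
  q ∈ S ∧ T ⊆ E ∧ (∀ a ∈ T, a.1 ∈ S ∧ a.2 ∈ S) ∧
  (∀ i ∈ S, i ≠ q → ∃! j, (i, j) ∈ T) ∧
  (∀ j, (q, j) ∉ T) ∧
  ∀ i ∈ S, Relation.ReflTransGen (arcRel T) i q

/-- `λ^{•q}_S`. -/
noncomputable def lamB (v : α → α → ℝ) (E : Finset (α × α)) (S : Finset α) (q : α) : EReal :=
  minW {T | IsTreeOn E T S q} (aweight v)

/-- `λ^•_S = min_{q ∈ S} λ^{•q}_S`. -/
noncomputable def lamBul (v : α → α → ℝ) (E : Finset (α × α)) (S : Finset α) : EReal :=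
  minW {T | ∃ q ∈ S, IsTreeOn E T S q} (aweight v)

/-- `T ∈ 𝓣^{∘q}_S`: `T` has `|S| + 1` vertices, `T|_S` is an entering tree with vertex
set `S` and root `q`, and the single arc of `T` leaving `S` goes from `q` to the root
`r ∉ S` of `T`. -/
def IsCTreeOn (E T : Finset (α × α)) (S : Finset α) (q : α) : Prop :=
  ∃ r, r ∉ S ∧ ∃ T', IsTreeOn E T' S q ∧ (q, r) ∈ E ∧ T = insert (q, r) T'

/-- `λ^{∘q}_S`. -/
noncomputable def lamC (v : α → α → ℝ) (E : Finset (α × α)) (S : Finset α) (q : α) : EReal :=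
  minW {T | IsCTreeOn E T S q} (aweight v)

/-- `λ^∘_S = min_{q ∈ S} λ^{∘q}_S`. -/
noncomputable def lamCirc (v : α → α → ℝ) (E : Finset (α × α)) (S : Finset α) : EReal :=
  minW {T | ∃ q ∈ S, IsCTreeOn E T S q} (aweight v)

/-- `μ^∘_S`: minimum of `Υ^F_S` over the spanning entering forests `F ∈ 𝓕^∘_S`,
i.e. those in which every vertex of `S` has an outgoing arc. -/
noncomputable def muCirc (v : α → α → ℝ) (E : Finset (α × α)) (S : Finset α) : EReal :=
  minW {A | A ⊆ E ∧ IsEForest A ∧ ∀ i ∈ S, ∃ j, (i, j) ∈ A} fun A => aweightOn v A S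

/-- `G ∈ 𝓡^F_y`: `G` is a descendant of `F` at the root `y`, i.e. `y` is a root of
`F`, the roots of `G` are those of `F` except `y`, `G` induces `T^F_q` on the vertex
set of every tree of `F` other than `T^F_y`, and `G` induces a tree on the vertex set
of `T^F_y`. -/
def IsDescendant (E F G : Finset (α × α)) (y : α) : Prop :=
  y ∈ rootSet F ∧ rootSet G = rootSet F \ {y} ∧
  (∀ q ∈ rootSet G, restrictArcs G (treeVerts F q) = treeArcs F q) ∧
  ∃ a ∈ treeVerts F y, IsTreeOn E (restrictArcs G (treeVerts F y)) (treeVerts F y) a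

/-- A potential graph: a connected weighted undirected graph with a loop at every
vertex.  Edges are recorded as a symmetric reflexive set of ordered pairs, with a
symmetric weight function `p`. -/
structure PotGraph (α : Type*) [Fintype α] [DecidableEq α] where
  p : α → α → ℝ
  edges : Finset (α × α)
  symm_mem : ∀ i j, (i, j) ∈ edges → (j, i) ∈ edges
  loop_mem : ∀ i, (i, i) ∈ edges
  symm_w : ∀ i j, p i j = p j i
  connected : ∀ i j : α, Relation.ReflTransGen (fun a b => (a, b) ∈ edges ∧ a ≠ b) i j

/-- Arc set of the barrier digraph of the potential graph `P`: an arc `(i,j)`, `i ≠ j`,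
for each non-loop edge of `P`. -/
def barcs (P : PotGraph α) : Finset (α × α) := P.edges.filter fun a => a.1 ≠ a.2

/-- Arc weights of the barrier digraph: `v i j = p i j - p i i`. -/
def bw (P : PotGraph α) : α → α → ℝ := fun i j => P.p i j - P.p i i

/-- Weight of a set of undirected edges of `P`. -/
noncomputable def uweight (P : PotGraph α) (T : Finset (Sym2 α)) : ℝ :=
  ∑ e ∈ T, Sym2.lift ⟨P.p, P.symm_w⟩ e

/-- `T ∈ 𝓣_S`: `T` is an undirected tree that is a subgraph of `P` (loops unused)
with vertex set `S`: its edges are non-loop edges of `P` joining vertices of `S`,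
it is connected on `S`, and it has `|S| - 1` edges. -/
def IsUTreeOn (P : PotGraph α) (T : Finset (Sym2 α)) (S : Finset α) : Prop :=
  (∀ e ∈ T, ∃ i j, i ≠ j ∧ e = s(i, j) ∧ (i, j) ∈ P.edges ∧ i ∈ S ∧ j ∈ S) ∧
  (∀ i ∈ S, ∀ j ∈ S, Relation.ReflTransGen (fun a b => s(a, b) ∈ T) i j) ∧
  T.card + 1 = S.card

/-- `ν_S`: minimum weight of an undirected tree on `S` that is a subgraph of `P`. -/
noncomputable def nu (P : PotGraph α) (S : Finset α) : EReal :=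
  minW {T | IsUTreeOn P T S} (uweight P)

/-- The underlying undirected edge set of a set of arcs. -/
def undir (A : Finset (α × α)) : Finset (Sym2 α) := A.image fun a => s(a.1, a.2)

/-- `Tq` is the entering tree (with root `q`, vertex set `S`, subgraph of the barrier
digraph of `P`) corresponding to the undirected tree `T`: it is obtained from `T` by
directing all edges toward `q` and replacing the weight of each arc `(i,j)` by
`v i j = p i j - p i i`. -/
def Corresponds (P : PotGraph α) (Tq : Finset (α × α)) (T : Finset (Sym2 α))
    (S : Finset α) (q : α) : Prop :=
  IsTreeOn (barcs P) Tq S q ∧ undir Tq = T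


section Aux
set_option linter.unusedSectionVars false

variable {v : α → α → ℝ} {E F G A B T : Finset (α × α)} {X S : Finset α}

/-- Acyclicity of an arc set. -/
def Acyclic (A : Finset (α × α)) : Prop := ∀ i, ¬ Relation.TransGen (arcRel A) i i

lemma arcRel_mono (h : A ⊆ B) : ∀ i j, arcRel A i j → arcRel B i j :=
  fun _ _ hij => h hij

lemma Acyclic.subset (hB : Acyclic B) (h : A ⊆ B) : Acyclic A := by
  intro i hi
  exact hB i (Relation.TransGen.mono (arcRel_mono h) _ _ hi)

lemma reflTransGen_mono (h : A ⊆ B) {i j : α}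
    (hij : Relation.ReflTransGen (arcRel A) i j) : Relation.ReflTransGen (arcRel B) i j :=
  Relation.ReflTransGen.mono (arcRel_mono h) _ _ hij

/-- Along any arc-path the value of a monotone potential weakly decreases. -/
lemma pot_le_of_rtg {p : α → ℕ} (hp : ∀ a ∈ A, p a.2 ≤ p a.1) {i j : α}
    (h : Relation.ReflTransGen (arcRel A) i j) : p j ≤ p i := by
  induction h with
  | refl => exact le_refl _
  | tail _ hbc ih => exact le_trans (hp _ hbc) ih

/-- The acyclicity engine: if a potential `p` weakly decreases along all arcs and
the restriction to each level is acyclic, then the whole arc set is acyclic. -/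
lemma acyclic_parts (p : α → ℕ) (hp : ∀ a ∈ A, p a.2 ≤ p a.1)
    (hcls : ∀ i, ¬ Relation.TransGen
      (arcRel (A.filter (fun a => p a.1 = p i ∧ p a.2 = p i))) i i) :
    Acyclic A := by
  intro i hi
  have key : ∀ u w, Relation.ReflTransGen (arcRel A) u w →
      Relation.ReflTransGen (arcRel A) w i → Relation.ReflTransGen (arcRel A) i u →
      Relation.ReflTransGen (arcRel (A.filter (fun a => p a.1 = p i ∧ p a.2 = p i))) u w := by
    intro u w huw
    induction huw using Relation.ReflTransGen.head_induction_on with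
    | refl => intro _ _; exact Relation.ReflTransGen.refl
    | @head uu c hac hcw ih =>
      intro hwi hiu
      have hui : Relation.ReflTransGen (arcRel A) uu i :=
        (Relation.ReflTransGen.head hac hcw).trans hwi
      have hci : Relation.ReflTransGen (arcRel A) c i := hcw.trans hwi
      have hic : Relation.ReflTransGen (arcRel A) i c :=
        hiu.trans (Relation.ReflTransGen.single hac)
      have h1 : p uu = p i :=
        le_antisymm (pot_le_of_rtg hp hiu) (pot_le_of_rtg hp hui)
      have h2 : p c = p i :=
        le_antisymm (pot_le_of_rtg hp hic) (pot_le_of_rtg hp hci)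
      refine Relation.ReflTransGen.head ?_ (ih hwi hic)
      exact Finset.mem_filter.2 ⟨hac, h1, h2⟩
  rcases (Relation.TransGen.head'_iff).1 hi with ⟨c, hic, hci⟩
  have h2 : p c = p i :=
    le_antisymm (pot_le_of_rtg hp (Relation.ReflTransGen.single hic)) (pot_le_of_rtg hp hci)
  refine hcls i (Relation.TransGen.head' ?_ (key c i hci Relation.ReflTransGen.refl
      (Relation.ReflTransGen.single hic)))
  exact Finset.mem_filter.2 ⟨hic, rfl, h2⟩

end Aux

section Forest
set_option linter.unusedSectionVars false

variable {A F G : Finset (α × α)}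

lemma mem_rootSet {i : α} : i ∈ rootSet A ↔ ∀ j, (i, j) ∉ A := by
  simp [rootSet]

lemma not_mem_rootSet {i j : α} (h : (i, j) ∈ A) : i ∉ rootSet A := by
  intro hr; exact (mem_rootSet.1 hr j) h

/-- In an out-degree-≤1 digraph, vertices reachable from a common vertex are
comparable. -/
lemma reach_comparable (hA : ∀ i j j', (i, j) ∈ A → (i, j') ∈ A → j = j') {i a b : α}
    (ha : Relation.ReflTransGen (arcRel A) i a) (hb : Relation.ReflTransGen (arcRel A) i b) :
    Relation.ReflTransGen (arcRel A) a b ∨ Relation.ReflTransGen (arcRel A) b a := by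
  induction ha using Relation.ReflTransGen.head_induction_on with
  | refl => exact Or.inl hb
  | @head u c huc hca ih =>
    rcases Relation.reflTransGen_iff_eq_or_transGen.1 hb with rfl | htb
    · exact Or.inr ((Relation.ReflTransGen.single huc).trans hca)
    · rcases (Relation.TransGen.head'_iff).1 htb with ⟨c', huc', hc'b⟩
      have : c' = c := hA _ _ _ huc' huc
      subst this
      exact ih hc'b

lemma root_rtg_eq {a b : α} (ha : a ∈ rootSet A)
    (h : Relation.ReflTransGen (arcRel A) a b) : a = b := by
  rcases Relation.reflTransGen_iff_eq_or_transGen.1 h with rfl | ht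
  · rfl
  · rcases (Relation.TransGen.head'_iff).1 ht with ⟨c, hac, _⟩
    exact absurd hac (mem_rootSet.1 ha c)

lemma root_unique (hA : ∀ i j j', (i, j) ∈ A → (i, j') ∈ A → j = j') {i a b : α}
    (haR : a ∈ rootSet A) (hbR : b ∈ rootSet A)
    (ha : Relation.ReflTransGen (arcRel A) i a) (hb : Relation.ReflTransGen (arcRel A) i b) :
    a = b := by
  rcases reach_comparable hA ha hb with h | h
  · exact root_rtg_eq haR h
  · exact (root_rtg_eq hbR h).symm

/-- Every vertex of a finite acyclic digraph with out-degree ≤ 1 reaches a root. -/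
lemma exists_reach_root (hA : IsEForest A) (i : α) :
    ∃ r ∈ rootSet A, Relation.ReflTransGen (arcRel A) i r := by
  -- strong induction on the number of vertices reachable from i
  have H : ∀ n (i : α), (Finset.univ.filter
      (fun j => Relation.ReflTransGen (arcRel A) i j)).card ≤ n →
      ∃ r ∈ rootSet A, Relation.ReflTransGen (arcRel A) i r := by
    intro n
    induction n with
    | zero =>
      intro i hcard
      exfalso
      have : i ∈ Finset.univ.filter (fun j => Relation.ReflTransGen (arcRel A) i j) := by
        simp only [Finset.mem_filter, Finset.mem_univ, true_and]
        exact Relation.ReflTransGen.refl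
      have := Finset.card_pos.2 ⟨i, this⟩
      omega
    | succ n ih =>
      intro i hcard
      by_cases hroot : i ∈ rootSet A
      · exact ⟨i, hroot, Relation.ReflTransGen.refl⟩
      · have : ∃ j, (i, j) ∈ A := by
          by_contra hno
          push_neg at hno
          exact hroot (mem_rootSet.2 hno)
        obtain ⟨j, hij⟩ := this
        have hji : ¬ Relation.ReflTransGen (arcRel A) j i := by
          intro hr
          exact hA.2 i (Relation.TransGen.head' hij hr)
        have hsub : Finset.univ.filter (fun w => Relation.ReflTransGen (arcRel A) j w) ⊂
            Finset.univ.filter (fun w => Relation.ReflTransGen (arcRel A) i w) := by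
          constructor
          · intro w hw
            simp only [Finset.mem_filter, Finset.mem_univ, true_and] at hw ⊢
            exact (Relation.ReflTransGen.single hij).trans hw
          · intro hsup
            have hi : i ∈ Finset.univ.filter (fun w => Relation.ReflTransGen (arcRel A) i w) := by
              simp only [Finset.mem_filter, Finset.mem_univ, true_and]
              exact Relation.ReflTransGen.refl
            have := hsup hi
            simp only [Finset.mem_filter, Finset.mem_univ, true_and] at this
            exact hji this
        have hlt := Finset.card_lt_card hsub
        obtain ⟨r, hr, hjr⟩ := ih j (by omega)
        exact ⟨r, hr, (Relation.ReflTransGen.single hij).trans hjr⟩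
  exact H _ i le_rfl

/-- The root of the tree of a vertex. -/
noncomputable def rootFn (A : Finset (α × α)) (i : α) : α :=
  if h : ∃ r ∈ rootSet A, Relation.ReflTransGen (arcRel A) i r then h.choose else i

lemma rootFn_mem (hA : IsEForest A) (i : α) : rootFn A i ∈ rootSet A := by
  have h := exists_reach_root hA i
  rw [rootFn, dif_pos h]
  exact h.choose_spec.1

lemma rootFn_rtg (hA : IsEForest A) (i : α) :
    Relation.ReflTransGen (arcRel A) i (rootFn A i) := by
  have h := exists_reach_root hA i
  rw [rootFn, dif_pos h]
  exact h.choose_spec.2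

lemma rootFn_eq_of (hA : IsEForest A) {i r : α} (hr : r ∈ rootSet A)
    (h : Relation.ReflTransGen (arcRel A) i r) : rootFn A i = r :=
  root_unique hA.1 (rootFn_mem hA i) hr (rootFn_rtg hA i) h

lemma rootFn_root (hA : IsEForest A) {r : α} (hr : r ∈ rootSet A) : rootFn A r = r :=
  rootFn_eq_of hA hr Relation.ReflTransGen.refl

lemma rootFn_arc (hA : IsEForest A) {i j : α} (h : (i, j) ∈ A) :
    rootFn A i = rootFn A j :=
  rootFn_eq_of hA (rootFn_mem hA j) ((Relation.ReflTransGen.single h).trans (rootFn_rtg hA j))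

lemma rootFn_rtg_eq (hA : IsEForest A) {i j : α}
    (h : Relation.ReflTransGen (arcRel A) i j) : rootFn A i = rootFn A j :=
  rootFn_eq_of hA (rootFn_mem hA j) (h.trans (rootFn_rtg hA j))

lemma mem_treeVerts {i l : α} :
    i ∈ treeVerts A l ↔ Relation.ReflTransGen (arcRel A) i l := by
  simp [treeVerts]

lemma mem_treeVerts_iff_rootFn (hA : IsEForest A) {i l : α} (hl : l ∈ rootSet A) :
    i ∈ treeVerts A l ↔ rootFn A i = l := by
  rw [mem_treeVerts]
  constructor
  · exact fun h => rootFn_eq_of hA hl h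
  · rintro rfl; exact rootFn_rtg hA i

lemma self_mem_treeVerts {l : α} : l ∈ treeVerts A l :=
  mem_treeVerts.2 Relation.ReflTransGen.refl

lemma root_mem_treeVerts_iff (hA : IsEForest A) {m l : α} (hm : m ∈ rootSet A)
    (hl : l ∈ rootSet A) : m ∈ treeVerts A l ↔ m = l := by
  rw [mem_treeVerts_iff_rootFn hA hl, rootFn_root hA hm]

end Forest

section Hyb
set_option linter.unusedSectionVars false

variable {v : α → α → ℝ} {A B : Finset (α × α)} {X : Finset α}

/-- The hybrid forest: arcs of `A` outside `X`, arcs of `B` on `X`. -/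
noncomputable def hyb (A B : Finset (α × α)) (X : Finset α) : Finset (α × α) :=
  A.filter (fun a => a.1 ∉ X) ∪ B.filter (fun a => a.1 ∈ X)

lemma mem_hyb {a : α × α} :
    a ∈ hyb A B X ↔ (a ∈ A ∧ a.1 ∉ X) ∨ (a ∈ B ∧ a.1 ∈ X) := by
  simp [hyb, Finset.mem_union, Finset.mem_filter]

lemma hyb_outdeg (hA : ∀ i j j', (i, j) ∈ A → (i, j') ∈ A → j = j')
    (hB : ∀ i j j', (i, j) ∈ B → (i, j') ∈ B → j = j') :
    ∀ i j j', (i, j) ∈ hyb A B X → (i, j') ∈ hyb A B X → j = j' := by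
  intro i j j' hj hj'
  rcases mem_hyb.1 hj with ⟨h1, h2⟩ | ⟨h1, h2⟩ <;>
    rcases mem_hyb.1 hj' with ⟨h1', h2'⟩ | ⟨h1', h2'⟩
  · exact hA _ _ _ h1 h1'
  · exact absurd h2' h2
  · exact absurd h2 h2'
  · exact hB _ _ _ h1 h1'

lemma rootSet_hyb : rootSet (hyb A B X) =
    (rootSet A).filter (fun i => i ∉ X) ∪ (rootSet B).filter (fun i => i ∈ X) := by
  ext i
  by_cases hi : i ∈ X
  · constructor
    · intro h
      refine Finset.mem_union_right _ (Finset.mem_filter.2 ⟨?_, hi⟩)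
      exact mem_rootSet.2 fun j hj => mem_rootSet.1 h j (mem_hyb.2 (Or.inr ⟨hj, hi⟩))
    · intro h
      rcases Finset.mem_union.1 h with h' | h'
      · exact absurd hi (Finset.mem_filter.1 h').2
      · refine mem_rootSet.2 fun j hj => ?_
        rcases mem_hyb.1 hj with ⟨-, h2⟩ | ⟨h1, -⟩
        · exact h2 hi
        · exact mem_rootSet.1 (Finset.mem_filter.1 h').1 j h1
  · constructor
    · intro h
      refine Finset.mem_union_left _ (Finset.mem_filter.2 ⟨?_, hi⟩)
      exact mem_rootSet.2 fun j hj => mem_rootSet.1 h j (mem_hyb.2 (Or.inl ⟨hj, hi⟩))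
    · intro h
      rcases Finset.mem_union.1 h with h' | h'
      · refine mem_rootSet.2 fun j hj => ?_
        rcases mem_hyb.1 hj with ⟨h1, -⟩ | ⟨-, h2⟩
        · exact mem_rootSet.1 (Finset.mem_filter.1 h').1 j h1
        · exact hi h2
      · exact absurd (Finset.mem_filter.1 h').2 hi

lemma aweight_filter_add (A : Finset (α × α)) (p : α × α → Prop) :
    aweight v (A.filter p) + aweight v (A.filter (fun a => ¬ p a)) = aweight v A := by
  rw [aweight, aweight, aweight, ← Finset.sum_union (Finset.disjoint_filter_filter_not A A p),
    Finset.filter_union_filter_not_eq]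

lemma aweight_union_of_disjoint {A B : Finset (α × α)} (h : Disjoint A B) :
    aweight v (A ∪ B) = aweight v A + aweight v B := by
  rw [aweight, aweight, aweight, Finset.sum_union h]

lemma disjoint_tails {A B : Finset (α × α)} :
    Disjoint (A.filter (fun a => a.1 ∉ X)) (B.filter (fun a => a.1 ∈ X)) := by
  rw [Finset.disjoint_left]
  intro a ha hb
  exact (Finset.mem_filter.1 ha).2 (Finset.mem_filter.1 hb).2

lemma aweight_hyb : aweight v (hyb A B X) =
    aweight v (A.filter (fun a => a.1 ∉ X)) + aweight v (B.filter (fun a => a.1 ∈ X)) :=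
  aweight_union_of_disjoint disjoint_tails

lemma aweight_mem_split (A : Finset (α × α)) (X : Finset α) :
    aweight v (A.filter (fun a => a.1 ∉ X)) + aweight v (A.filter (fun a => a.1 ∈ X))
      = aweight v A := by
  rw [aweight, aweight, aweight, ← Finset.sum_union disjoint_tails]
  congr 1
  ext a
  simp only [Finset.mem_union, Finset.mem_filter]
  tauto

lemma aweight_hyb_add :
    aweight v (hyb A B X) + aweight v (hyb B A X) = aweight v A + aweight v B := by
  rw [aweight_hyb, aweight_hyb]
  linarith [aweight_mem_split (v := v) A X, aweight_mem_split (v := v) B X]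

lemma hyb_subset {E : Finset (α × α)} (hA : A ⊆ E) (hB : B ⊆ E) : hyb A B X ⊆ E := by
  intro a ha
  rcases mem_hyb.1 ha with ⟨h, -⟩ | ⟨h, -⟩
  · exact hA h
  · exact hB h

end Hyb

section MinW
set_option linter.unusedSectionVars false

lemma minW_le {β : Type*} {s : Set β} {w : β → ℝ} {x : β} (hx : x ∈ s) :
    minW s w ≤ (w x : EReal) :=
  sInf_le ⟨x, hx, rfl⟩

lemma le_minW {β : Type*} {s : Set β} {w : β → ℝ} {c : EReal}
    (h : ∀ x ∈ s, c ≤ (w x : EReal)) : c ≤ minW s w := by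
  apply le_sInf
  rintro b ⟨x, hx, rfl⟩
  exact h x hx

/-- Finite nonempty families attain their minimum. -/
lemma minW_attained {E : Finset (α × α)} {s : Set (Finset (α × α))} {w : Finset (α × α) → ℝ}
    (hsub : ∀ A ∈ s, A ⊆ E) (hne : s.Nonempty) : ∃ A ∈ s, minW s w = (w A : EReal) := by
  have hfin : s.Finite := by
    apply Set.Finite.subset (Finset.finite_toSet E.powerset)
    intro A hA
    simpa [Finset.mem_powerset] using hsub A hA
  have himg : ((fun x => ((w x : EReal))) '' s).Finite := hfin.image _
  have hmem := (hne.image _).csInf_mem himg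
  rcases hmem with ⟨A, hA, hw⟩
  refine ⟨A, hA, ?_⟩
  rw [minW]
  exact hw.symm

lemma minW_ne_bot {E : Finset (α × α)} {s : Set (Finset (α × α))} {w : Finset (α × α) → ℝ}
    (hsub : ∀ A ∈ s, A ⊆ E) : minW s w ≠ ⊥ := by
  rcases Set.eq_empty_or_nonempty s with rfl | hne
  · simp [minW]
  · obtain ⟨A, _, hA⟩ := minW_attained hsub hne
    rw [hA]
    exact EReal.coe_ne_bot _

end MinW

section Tree
set_option linter.unusedSectionVars false

variable {v : α → α → ℝ} {E F T A : Finset (α × α)} {S : Finset α} {q a : α} {k : ℕ}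

lemma IsTreeOn.outdeg (hT : IsTreeOn E T S q) :
    ∀ i j j', (i, j) ∈ T → (i, j') ∈ T → j = j' := by
  intro i j j' hj hj'
  have hiS : i ∈ S := (hT.2.2.1 _ hj).1
  by_cases hiq : i = q
  · subst hiq; exact absurd hj (hT.2.2.2.2.1 j)
  · obtain ⟨c, -, hc⟩ := hT.2.2.2.1 i hiS hiq
    rw [hc j hj, hc j' hj']

lemma IsTreeOn.acyclic (hT : IsTreeOn E T S q) : Acyclic T := by
  have key : ∀ i, Relation.ReflTransGen (arcRel T) i q → ¬ Relation.TransGen (arcRel T) i i := by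
    intro i hiq
    induction hiq using Relation.ReflTransGen.head_induction_on with
    | refl =>
      intro hcyc
      rcases (Relation.TransGen.head'_iff).1 hcyc with ⟨c, hqc, -⟩
      exact hT.2.2.2.2.1 c hqc
    | @head u c huc hcq ih =>
      intro hcyc
      rcases (Relation.TransGen.head'_iff).1 hcyc with ⟨c', huc', hc'u⟩
      have : c' = c := hT.outdeg _ _ _ huc' huc
      subst this
      exact ih (Relation.TransGen.tail' hc'u huc)
  intro i hcyc
  rcases (Relation.TransGen.head'_iff).1 hcyc with ⟨c, hic, -⟩
  have hiS : i ∈ S := (hT.2.2.1 _ hic).1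
  exact key i (hT.2.2.2.2.2 i hiS) hcyc

lemma IsTreeOn.tails (hT : IsTreeOn E T S q) : T.filter (fun x => x.1 ∈ S) = T := by
  apply Finset.filter_true_of_mem
  intro x hx
  exact (hT.2.2.1 _ hx).1

/-- The tree of a minimal forest at a root is an entering tree on its vertex set. -/
lemma treeArcs_isTreeOn (hF : IsEForest F) (hFE : F ⊆ E) (ha : a ∈ rootSet F) :
    IsTreeOn E (treeArcs F a) (treeVerts F a) a := by
  have hsub : treeArcs F a ⊆ F := Finset.filter_subset _ _
  refine ⟨self_mem_treeVerts, hsub.trans hFE, ?_, ?_, ?_, ?_⟩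
  · rintro ⟨i, j⟩ hij
    have h1 := Finset.mem_filter.1 hij
    refine ⟨h1.2, ?_⟩
    rw [mem_treeVerts_iff_rootFn hF ha] at h1 ⊢
    rw [← h1.2]
    exact (rootFn_arc hF h1.1).symm
  · intro i hiS hiq
    have hrtg := mem_treeVerts.1 hiS
    rcases Relation.reflTransGen_iff_eq_or_transGen.1 hrtg with rfl | ht
    · exact absurd rfl hiq
    · rcases (Relation.TransGen.head'_iff).1 ht with ⟨c, hic, -⟩
      refine ⟨c, Finset.mem_filter.2 ⟨hic, hiS⟩, ?_⟩
      intro j hj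
      exact hF.1 _ _ _ (Finset.mem_filter.1 hj).1 hic
  · intro j hj
    exact mem_rootSet.1 ha j (Finset.mem_filter.1 hj).1
  · intro i hiS
    have hrtg := mem_treeVerts.1 hiS
    clear hiS
    induction hrtg using Relation.ReflTransGen.head_induction_on with
    | refl => exact Relation.ReflTransGen.refl
    | @head u c huc hca ih =>
      have huS : u ∈ treeVerts F a :=
        mem_treeVerts.2 ((Relation.ReflTransGen.single huc).trans hca)
      exact Relation.ReflTransGen.head
        (show arcRel (treeArcs F a) u c from Finset.mem_filter.2 ⟨huc, huS⟩) ih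

/-- Arcs of `F` outside the tree of `a` cannot enter that tree. -/
lemma arc_outside_tree (hF : IsEForest F) (ha : a ∈ rootSet F) {i j : α}
    (hij : (i, j) ∈ F) (hi : i ∉ treeVerts F a) : j ∉ treeVerts F a := by
  rw [mem_treeVerts_iff_rootFn hF ha] at hi ⊢
  rw [← rootFn_arc hF hij]
  exact hi

/-- Replacing the tree at root `a` by any entering tree on the same vertex set
(possibly with one extra escaping arc, handled separately) stays a forest. -/
lemma replace_tree_forest (hF : IsEForest F) (ha : a ∈ rootSet F)
    (hTout : ∀ i j j', (i, j) ∈ T → (i, j') ∈ T → j = j')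
    (hTin : ∀ x ∈ T, x.1 ∈ treeVerts F a)
    (hTcls : ∀ i, ¬ Relation.TransGen
      (arcRel (T.filter (fun x => x.2 ∈ treeVerts F a))) i i) :
    IsEForest (hyb F T (treeVerts F a)) := by
  set S := treeVerts F a with hS
  constructor
  · apply hyb_outdeg hF.1 hTout
  · apply acyclic_parts (fun i => if i ∈ S then 1 else 0)
    · rintro ⟨i, j⟩ hij
      rcases mem_hyb.1 hij with ⟨h1, h2⟩ | ⟨h1, h2⟩
      · simp only [if_neg h2, if_neg (arc_outside_tree hF ha h1 h2)]
        rw [if_neg (show j ∉ S from arc_outside_tree hF ha h1 h2)]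
      · simp only [if_pos h2]
        split <;> omega
    · intro i
      by_cases hi : i ∈ S
      · refine fun hcyc => hTcls i (Relation.TransGen.mono (arcRel_mono ?_) _ _ hcyc)
        intro x hx
        have h1 := Finset.mem_filter.1 hx
        simp only [if_pos hi] at h1
        have hx1 : x.1 ∈ S := by
          by_contra hc
          simp [if_neg hc] at h1
        have hx2 : x.2 ∈ S := by
          by_contra hc
          have := h1.2.2
          simp [if_neg hc] at this
        rcases mem_hyb.1 h1.1 with ⟨hF', hF2⟩ | ⟨hT', -⟩
        · exact absurd hx1 hF2
        · exact Finset.mem_filter.2 ⟨hT', hx2⟩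
      · refine fun hcyc => hF.2 i (Relation.TransGen.mono (arcRel_mono ?_) _ _ hcyc)
        intro x hx
        have h1 := Finset.mem_filter.1 hx
        simp only [if_neg hi] at h1
        have hx1 : x.1 ∉ S := by
          intro hc
          simp [if_pos hc] at h1
        rcases mem_hyb.1 h1.1 with ⟨hF', -⟩ | ⟨hT', hT2⟩
        · exact hF'
        · exact absurd hT2 hx1

lemma rootSet_card {k : ℕ} (hF : F ∈ FSet E k) : (rootSet F).card = k := hF.2.2

/-- Root set of a tree replacement. -/
lemma rootSet_replace (hF : IsEForest F) (ha : a ∈ rootSet F)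
    (hTarc : ∀ i ∈ treeVerts F a, i ≠ q → ∃ j, (i, j) ∈ T)
    (hTq : ∀ j, (q, j) ∉ T) (hq : q ∈ treeVerts F a)
    (hTin : ∀ x ∈ T, x.1 ∈ treeVerts F a) :
    rootSet (hyb F T (treeVerts F a)) = insert q ((rootSet F).erase a) := by
  set S := treeVerts F a
  rw [rootSet_hyb]
  ext i
  simp only [Finset.mem_union, Finset.mem_filter, Finset.mem_insert, Finset.mem_erase]
  constructor
  · rintro (⟨h1, h2⟩ | ⟨h1, h2⟩)
    · right
      refine ⟨fun hia => ?_, h1⟩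
      exact h2 (hia ▸ self_mem_treeVerts)
    · by_cases hiq : i = q
      · exact Or.inl hiq
      · obtain ⟨j, hj⟩ := hTarc i h2 hiq
        exact absurd hj (mem_rootSet.1 h1 j)
  · rintro (rfl | ⟨h1, h2⟩)
    · right
      refine ⟨mem_rootSet.2 hTq, hq⟩
    · left
      refine ⟨h2, fun hiS => ?_⟩
      exact h1 ((root_mem_treeVerts_iff hF h2 ha).1 hiS)

lemma card_insert_erase (hq : q ∈ treeVerts F a) (hF : IsEForest F) (ha : a ∈ rootSet F)
    (hcard : (rootSet F).card = k) :
    (insert q ((rootSet F).erase a)).card = k := by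
  have hqa : q ∉ (rootSet F).erase a := by
    intro hqmem
    have h1 := Finset.mem_erase.1 hqmem
    exact h1.1 ((root_mem_treeVerts_iff hF h1.2 ha).1 hq)
  rw [Finset.card_insert_of_notMem hqa, Finset.card_erase_of_mem ha, hcard]
  have : 1 ≤ k := by
    rw [← hcard]
    exact Finset.card_pos.2 ⟨a, ha⟩
  omega

end Tree

section Surgery
set_option linter.unusedSectionVars false

variable {v : α → α → ℝ} {E F T T' CT : Finset (α × α)} {q a r : α} {k : ℕ}

lemma mem_FSet {A : Finset (α × α)} :
    A ∈ FSet E k ↔ A ⊆ E ∧ IsEForest A ∧ (rootSet A).card = k := Iff.rfl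

/-- Replacing the tree at a root by another entering tree gives a forest in the
same class. -/
lemma hybT_mem_FSet (hFk : F ∈ FSet E k) (ha : a ∈ rootSet F)
    (hT : IsTreeOn E T (treeVerts F a) q) : hyb F T (treeVerts F a) ∈ FSet E k := by
  obtain ⟨hFE, hFor, hcard⟩ := hFk
  refine ⟨hyb_subset hFE hT.2.1, ?_, ?_⟩
  · refine replace_tree_forest hFor ha hT.outdeg (fun x hx => (hT.2.2.1 x hx).1) ?_
    exact (hT.acyclic.subset (Finset.filter_subset _ _))
  · rw [rootSet_replace hFor ha
      (fun i hi hiq => ((hT.2.2.2.1 i hi hiq).exists))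
      hT.2.2.2.2.1 hT.1 (fun x hx => (hT.2.2.1 x hx).1)]
    exact card_insert_erase hT.1 hFor ha hcard

lemma ctree_outdeg (hT : IsTreeOn E T' S q) (hCT : CT = insert (q, r) T') :
    ∀ i j j', (i, j) ∈ CT → (i, j') ∈ CT → j = j' := by
  subst hCT
  intro i j j' hj hj'
  rcases Finset.mem_insert.1 hj with h | h <;> rcases Finset.mem_insert.1 hj' with h' | h'
  · rw [show j = r from (Prod.ext_iff.1 h).2, show j' = r from (Prod.ext_iff.1 h').2]
  · exfalso
    have hiq : i = q := (Prod.ext_iff.1 h).1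
    subst hiq
    exact hT.2.2.2.2.1 _ h'
  · exfalso
    have hiq : i = q := (Prod.ext_iff.1 h').1
    subst hiq
    exact hT.2.2.2.2.1 _ h
  · exact hT.outdeg _ _ _ h h'

/-- Replacing the tree at root `a` by a circle tree gives a forest with one root
fewer. -/
lemma hybCT_mem_FSet (hFk : F ∈ FSet E k) (ha : a ∈ rootSet F)
    (hCT : IsCTreeOn E CT (treeVerts F a) q) : hyb F CT (treeVerts F a) ∈ FSet E (k - 1) := by
  obtain ⟨hFE, hFor, hcard⟩ := hFk
  obtain ⟨r, hrS, T', hT', hqrE, hCTeq⟩ := hCT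
  set S := treeVerts F a with hSdef
  have hCTsub : CT ⊆ E := by
    rw [hCTeq]
    intro x hx
    rcases Finset.mem_insert.1 hx with rfl | h
    · exact hqrE
    · exact hT'.2.1 h
  have hCTtails : ∀ x ∈ CT, x.1 ∈ S := by
    rw [hCTeq]
    intro x hx
    rcases Finset.mem_insert.1 hx with rfl | h
    · exact hT'.1
    · exact (hT'.2.2.1 x h).1
  have hCTarc : ∀ i ∈ S, ∃ j, (i, j) ∈ CT := by
    intro i hi
    by_cases hiq : i = q
    · exact ⟨r, by rw [hCTeq, hiq]; exact Finset.mem_insert_self _ _⟩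
    · obtain ⟨j, hj, -⟩ := hT'.2.2.2.1 i hi hiq
      exact ⟨j, by rw [hCTeq]; exact Finset.mem_insert_of_mem hj⟩
  refine ⟨hyb_subset hFE hCTsub, ?_, ?_⟩
  · refine replace_tree_forest hFor ha (ctree_outdeg hT' hCTeq) hCTtails ?_
    refine (hT'.acyclic.subset ?_)
    intro x hx
    have h1 := Finset.mem_filter.1 hx
    rw [hCTeq] at h1
    rcases Finset.mem_insert.1 h1.1 with rfl | h
    · exact absurd h1.2 hrS
    · exact h
  · have : rootSet (hyb F CT S) = (rootSet F).erase a := by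
      rw [rootSet_hyb]
      ext i
      simp only [Finset.mem_union, Finset.mem_filter, Finset.mem_erase]
      constructor
      · rintro (⟨h1, h2⟩ | ⟨h1, h2⟩)
        · exact ⟨fun hia => h2 (hia ▸ self_mem_treeVerts), h1⟩
        · obtain ⟨j, hj⟩ := hCTarc i h2
          exact absurd hj (mem_rootSet.1 h1 j)
      · rintro ⟨h1, h2⟩
        left
        exact ⟨h2, fun hiS => h1 ((root_mem_treeVerts_iff hFor h2 ha).1 hiS)⟩
    rw [this, Finset.card_erase_of_mem ha, hcard]

lemma aweight_hyb_tree (hTin : T.filter (fun x => x.1 ∈ S) = T) :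
    aweight v (hyb F T S) = aweight v (F.filter (fun x => x.1 ∉ S)) + aweight v T := by
  rw [aweight_hyb, hTin]

lemma aweight_treeArcs_split :
    aweight v (F.filter (fun x => x.1 ∉ treeVerts F a)) + aweight v (treeArcs F a)
      = aweight v F :=
  aweight_mem_split F (treeVerts F a)

/-- Fact A: `λ^•` of the tree of a minimal forest equals the weight of that tree. -/
lemma lamBul_eq (hF : IsMinForest v E k F) (ha : a ∈ rootSet F) :
    lamBul v E (treeVerts F a) = (aweight v (treeArcs F a) : EReal) := by
  obtain ⟨hFk, hmin⟩ := hF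
  apply le_antisymm
  · exact minW_le ⟨a, self_mem_treeVerts, treeArcs_isTreeOn hFk.2.1 hFk.1 ha⟩
  · apply le_minW
    rintro T ⟨q, hq, hT⟩
    have hmem := hybT_mem_FSet hFk ha hT
    have h1 : phi v E k ≤ (aweight v (hyb F T (treeVerts F a)) : EReal) := minW_le hmem
    rw [← hmin] at h1
    have h2 : aweight v F ≤ aweight v (hyb F T (treeVerts F a)) := by
      exact_mod_cast h1
    rw [aweight_hyb_tree hT.tails] at h2
    have h3 := aweight_treeArcs_split (v := v) (F := F) (a := a)
    have : aweight v (treeArcs F a) ≤ aweight v T := by linarith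
    exact_mod_cast this

lemma lamBul_ne_top (hF : IsMinForest v E k F) (ha : a ∈ rootSet F) :
    lamBul v E (treeVerts F a) ≠ ⊤ := by
  rw [lamBul_eq hF ha]
  exact EReal.coe_ne_top _

/-- The `≤` direction of Statement 4. -/
lemma phi_pred_le (hF : IsMinForest v E k F) (ha : a ∈ rootSet F) :
    phi v E (k - 1) ≤ phi v E k +
      (lamCirc v E (treeVerts F a) - lamBul v E (treeVerts F a)) := by
  obtain ⟨hFk, hmin⟩ := hF
  set S := treeVerts F a with hSdef
  by_cases hne : {T | ∃ q ∈ S, IsCTreeOn E T S q}.Nonempty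
  · -- attained circle tree
    have hsub : ∀ A ∈ {T | ∃ q ∈ S, IsCTreeOn E T S q}, A ⊆ E := by
      rintro A ⟨q, -, r, -, T', hT', hqrE, rfl⟩
      intro x hx
      rcases Finset.mem_insert.1 hx with rfl | h
      · exact hqrE
      · exact hT'.2.1 h
    obtain ⟨CT, hCTmem, hCTval⟩ := minW_attained hsub hne
    obtain ⟨q, -, hCT⟩ := hCTmem
    have hmem := hybCT_mem_FSet hFk ha hCT
    have h1 : phi v E (k - 1) ≤ (aweight v (hyb F CT S) : EReal) := minW_le hmem
    have hCTtails : CT.filter (fun x => x.1 ∈ S) = CT := by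
      apply Finset.filter_true_of_mem
      obtain ⟨r, hrS, T', hT', hqrE, rfl⟩ := hCT
      intro x hx
      rcases Finset.mem_insert.1 hx with rfl | h
      · exact hT'.1
      · exact (hT'.2.2.1 x h).1
    have h2 : aweight v (hyb F CT S) =
        aweight v F - aweight v (treeArcs F a) + aweight v CT := by
      have h3 := aweight_treeArcs_split (v := v) (F := F) (a := a)
      rw [aweight_hyb_tree hCTtails]
      rw [hSdef]
      linarith
    rw [lamBul_eq ⟨hFk, hmin⟩ ha, ← hmin]
    have : lamCirc v E S = (aweight v CT : EReal) := hCTval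
    rw [this]
    calc phi v E (k - 1) ≤ (aweight v (hyb F CT S) : EReal) := h1
      _ = ((aweight v F + (aweight v CT - aweight v (treeArcs F a)) : ℝ) : EReal) := by
          rw [h2]; norm_cast; ring
      _ = (aweight v F : EReal) + ((aweight v CT : EReal) - (aweight v (treeArcs F a) : EReal)) := by
          rw [EReal.coe_add, EReal.coe_sub]
  · -- no circle tree: RHS is ⊤
    have htop : lamCirc v E S = ⊤ := by
      rw [lamCirc, minW]
      rw [Set.not_nonempty_iff_eq_empty.1 hne]
      simp
    rw [htop, lamBul_eq ⟨hFk, hmin⟩ ha, EReal.top_sub_coe, ← hmin, EReal.coe_add_top]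
    exact le_top
end Surgery

section Lower
set_option linter.unusedSectionVars false

variable {v : α → α → ℝ} {E F G : Finset (α × α)} {k : ℕ}

/-- A cross arc of `G` relative to the tree partition of `F`. -/
def IsCross (F G : Finset (α × α)) (x : α) : Prop :=
  ∃ w, (x, w) ∈ G ∧ rootFn F w ≠ rootFn F x

lemma rtg_rootFn_eq (hF : IsEForest F)
    (hnc : ∀ x, ¬ IsCross F G x) {i j : α}
    (h : Relation.ReflTransGen (arcRel G) i j) : rootFn F i = rootFn F j := by
  induction h with
  | refl => rfl
  | @tail b c hab hbc ih =>
    rw [ih]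
    by_contra hne
    exact hnc b ⟨c, hbc, fun he => hne he.symm⟩

/-- Cross arcs exist whenever `G` has fewer roots than `F`. -/
lemma exists_cross (hF : IsEForest F) (hG : IsEForest G)
    (hcard : (rootSet G).card < (rootSet F).card) : ∃ x, IsCross F G x := by
  by_contra hnc
  push_neg at hnc
  have hinj : Set.InjOn (rootFn G) (rootSet F) := by
    intro l hl l' hl' he
    have h1 : rootFn F l = rootFn F (rootFn G l) := rtg_rootFn_eq hF hnc (rootFn_rtg hG l)
    have h2 : rootFn F l' = rootFn F (rootFn G l') := rtg_rootFn_eq hF hnc (rootFn_rtg hG l')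
    rw [rootFn_root hF hl] at h1
    rw [rootFn_root hF hl'] at h2
    rw [he] at h1
    exact h1.trans h2.symm
  have hmap : ∀ l ∈ rootSet F, rootFn G l ∈ rootSet G := fun l _ => rootFn_mem hG l
  have := Finset.card_le_card_of_injOn _ hmap hinj
  omega

/-- There is a cross tail whose set of `G`-ancestors is minimal. -/
lemma exists_min_cross (hF : IsEForest F) (hG : IsEForest G)
    (hcard : (rootSet G).card < (rootSet F).card) :
    ∃ x, IsCross F G x ∧ ∀ z, IsCross F G z →
      Relation.ReflTransGen (arcRel G) z x → z = x := by
  obtain ⟨x₀, hx₀⟩ := exists_cross hF hG hcard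
  set CTs := Finset.univ.filter (fun x => IsCross F G x) with hCTs
  have hx₀m : x₀ ∈ CTs := by simp [hCTs, hx₀]
  obtain ⟨x, hxm, hmin⟩ := Finset.exists_min_image CTs
    (fun x => (Finset.univ.filter (fun u => Relation.ReflTransGen (arcRel G) u x)).card)
    ⟨x₀, hx₀m⟩
  refine ⟨x, (Finset.mem_filter.1 hxm).2, ?_⟩
  intro z hz hzx
  by_contra hne
  have hzm : z ∈ CTs := by simp [hCTs, hz]
  have hsub : Finset.univ.filter (fun u => Relation.ReflTransGen (arcRel G) u z) ⊂
      Finset.univ.filter (fun u => Relation.ReflTransGen (arcRel G) u x) := by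
    constructor
    · intro u hu
      simp only [Finset.mem_filter, Finset.mem_univ, true_and] at hu ⊢
      exact hu.trans hzx
    · intro hsup
      have hx : x ∈ Finset.univ.filter (fun u => Relation.ReflTransGen (arcRel G) u x) := by
        simp only [Finset.mem_filter, Finset.mem_univ, true_and]
        exact Relation.ReflTransGen.refl
      have hxz := hsup hx
      simp only [Finset.mem_filter, Finset.mem_univ, true_and] at hxz
      rcases Relation.reflTransGen_iff_eq_or_transGen.1 hzx with rfl | ht
      · exact hne rfl
      · exact hG.2 z (Relation.TransGen.trans_left ht hxz)
  have := Finset.card_lt_card hsub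
  have := hmin z hzm
  omega

end Lower

section XFacts
set_option linter.unusedSectionVars false

variable {v : α → α → ℝ} {E F G : Finset (α × α)} {x w : α}

/-- The set of `G`-ancestors of `x` (including `x`). -/
noncomputable def anc (G : Finset (α × α)) (x : α) : Finset α :=
  Finset.univ.filter (fun u => Relation.ReflTransGen (arcRel G) u x)

lemma mem_anc {u : α} : u ∈ anc G x ↔ Relation.ReflTransGen (arcRel G) u x := by
  simp [anc]

lemma self_mem_anc : x ∈ anc G x := mem_anc.2 Relation.ReflTransGen.refl

lemma anc_closure {u c : α} (hc : (u, c) ∈ G) (hcX : c ∈ anc G x) : u ∈ anc G x :=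
  mem_anc.2 (Relation.ReflTransGen.head hc (mem_anc.1 hcX))

lemma anc_rootFn (hF : IsEForest F)
    (hmax : ∀ z, IsCross F G z → Relation.ReflTransGen (arcRel G) z x → z = x) :
    ∀ u ∈ anc G x, rootFn F u = rootFn F x := by
  intro u hu
  have hu' := mem_anc.1 hu
  induction hu' using Relation.ReflTransGen.head_induction_on with
  | refl => rfl
  | @head u' c huc hcx ih =>
    by_cases hux : u' = x
    · rw [hux]
    · have hc : rootFn F c = rootFn F x := ih (mem_anc.2 hcx)
      by_cases hcr : rootFn F c = rootFn F u'
      · rw [← hcr, hc]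
      · exfalso
        exact hux (hmax u' ⟨c, huc, hcr⟩
          (Relation.ReflTransGen.head huc hcx))

lemma anc_intree (hG : IsEForest G) {u c : α} (hc : (u, c) ∈ G)
    (huX : u ∈ anc G x) (hux : u ≠ x) : c ∈ anc G x := by
  have := mem_anc.1 huX
  rcases Relation.reflTransGen_iff_eq_or_transGen.1 this with rfl | ht
  · exact absurd rfl hux
  · rcases (Relation.TransGen.head'_iff).1 ht with ⟨c', huc', hc'x⟩
    have : c = c' := hG.1 _ _ _ hc huc'
    subst this
    exact mem_anc.2 hc'x

lemma anc_has_arc (hxw : (x, w) ∈ G) {u : α} (huX : u ∈ anc G x) :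
    ∃ j, (u, j) ∈ G := by
  rcases Relation.reflTransGen_iff_eq_or_transGen.1 (mem_anc.1 huX) with rfl | ht
  · exact ⟨w, hxw⟩
  · rcases (Relation.TransGen.head'_iff).1 ht with ⟨c', huc', -⟩
    exact ⟨c', huc'⟩

lemma anc_no_Groot (hxw : (x, w) ∈ G) {u : α} (huX : u ∈ anc G x) :
    u ∉ rootSet G := by
  obtain ⟨j, hj⟩ := anc_has_arc hxw huX
  exact not_mem_rootSet hj

/-- The hybrid `G[X←f]` is acyclic, by the ancestor-closure argument. -/
lemma hybGF_acyclic (hF : IsEForest F) (hG : IsEForest G) :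
    Acyclic (hyb G F (anc G x)) := by
  apply acyclic_parts (fun i => if i ∈ anc G x then 1 else 0)
  · rintro ⟨i, j⟩ hij
    rcases mem_hyb.1 hij with ⟨h1, h2⟩ | ⟨h1, h2⟩
    · -- G-arc with tail outside X: head outside X by closure
      have : j ∉ anc G x := fun hj => h2 (anc_closure h1 hj)
      simp only [if_neg h2, if_neg this]
      exact le_refl _
    · simp only [if_pos h2]
      split <;> omega
  · intro i
    by_cases hi : i ∈ anc G x
    · refine fun hcyc => hF.2 i (Relation.TransGen.mono (arcRel_mono ?_) _ _ hcyc)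
      intro ar har
      have h1 := Finset.mem_filter.1 har
      simp only [if_pos hi] at h1
      have hx1 : ar.1 ∈ anc G x := by
        by_contra hc
        simp [if_neg hc] at h1
      rcases mem_hyb.1 h1.1 with ⟨-, h2⟩ | ⟨hFa, -⟩
      · exact absurd hx1 h2
      · exact hFa
    · refine fun hcyc => hG.2 i (Relation.TransGen.mono (arcRel_mono ?_) _ _ hcyc)
      intro ar har
      have h1 := Finset.mem_filter.1 har
      simp only [if_neg hi] at h1
      have hx1 : ar.1 ∉ anc G x := by
        intro hc
        simp [if_pos hc] at h1
      rcases mem_hyb.1 h1.1 with ⟨hGa, -⟩ | ⟨-, h2⟩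
      · exact hGa
      · exact absurd h2 hx1

/-- The hybrid `F[X←g]` is acyclic. -/
lemma hybFG_acyclic (hF : IsEForest F) (hG : IsEForest G)
    (hxw : (x, w) ∈ G) (hcross : rootFn F w ≠ rootFn F x)
    (hmax : ∀ z, IsCross F G z → Relation.ReflTransGen (arcRel G) z x → z = x) :
    Acyclic (hyb F G (anc G x)) := by
  set X := anc G x with hX
  set a := rootFn F x with ha
  set S := treeVerts F a with hS
  have hXS : ∀ u ∈ X, u ∈ S := by
    intro u hu
    rw [hS, mem_treeVerts_iff_rootFn hF (rootFn_mem hF x)]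
    exact anc_rootFn hF hmax u hu
  have hwS : w ∉ S := by
    rw [hS, mem_treeVerts_iff_rootFn hF (rootFn_mem hF x)]
    exact hcross
  have hxarc : ∀ j, (x, j) ∈ G → j = w := fun j hj => hG.1 _ _ _ hj hxw
  apply acyclic_parts (fun i => if i ∈ S then 1 else 0)
  · rintro ⟨i, j⟩ hij
    rcases mem_hyb.1 hij with ⟨h1, h2⟩ | ⟨h1, h2⟩
    · -- F-arc: preserves the tree of a
      have : i ∈ S ↔ j ∈ S := by
        rw [hS, mem_treeVerts_iff_rootFn hF (rootFn_mem hF x),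
          mem_treeVerts_iff_rootFn hF (rootFn_mem hF x), rootFn_arc hF h1]
      by_cases hiS : i ∈ S
      · simp [if_pos hiS, if_pos (this.1 hiS)]
      · simp [if_neg hiS, if_neg (fun hj => hiS (this.2 hj))]
    · -- G-arc with tail in X
      have hiS : i ∈ S := hXS _ h2
      simp only [if_pos hiS]
      split <;> omega
  · intro i
    by_cases hi : i ∈ S
    · -- arcs staying in S; apply the inner partition by X
      intro hcyc
      set A1 := (hyb F G X).filter
        (fun ar => (if ar.1 ∈ S then 1 else 0) = (if i ∈ S then 1 else 0) ∧
          (if ar.2 ∈ S then 1 else 0) = (if i ∈ S then 1 else 0)) with hA1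
      have hmemA1 : ∀ ar ∈ A1, ar ∈ hyb F G X ∧ ar.1 ∈ S ∧ ar.2 ∈ S := by
        intro ar har
        have h1 := Finset.mem_filter.1 har
        simp only [if_pos hi] at h1
        refine ⟨h1.1, ?_, ?_⟩
        · by_contra hc
          have := h1.2.1
          simp [if_neg hc] at this
        · by_contra hc
          have := h1.2.2
          simp [if_neg hc] at this
      have : Acyclic A1 := by
        apply acyclic_parts (fun u => if u ∈ X then 0 else 1)
        · rintro ⟨i', j'⟩ hij
          obtain ⟨hhyb, hi'S, hj'S⟩ := hmemA1 _ hij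
          rcases mem_hyb.1 hhyb with ⟨h1, h2⟩ | ⟨h1, h2⟩
          · simp only [if_neg h2]
            split <;> omega
          · -- G-arc, tail in X: head must be in X (else tail = x and head = w ∉ S)
            by_cases hix : i' = x
            · exfalso
              subst hix
              exact hwS (hxarc j' h1 ▸ hj'S)
            · have : j' ∈ X := anc_intree hG h1 h2 hix
              simp [if_pos h2, if_pos this]
        · intro i'
          by_cases hi' : i' ∈ X
          · refine fun hcyc' => hG.2 i' (Relation.TransGen.mono (arcRel_mono ?_) _ _ hcyc')
            intro ar har
            have h1 := Finset.mem_filter.1 har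
            simp only [if_pos hi'] at h1
            have hx1 : ar.1 ∈ X := by
              by_contra hc
              simp [if_neg hc] at h1
            obtain ⟨hhyb, -, -⟩ := hmemA1 _ h1.1
            rcases mem_hyb.1 hhyb with ⟨-, h2⟩ | ⟨hGa, -⟩
            · exact absurd hx1 h2
            · exact hGa
          · refine fun hcyc' => hF.2 i' (Relation.TransGen.mono (arcRel_mono ?_) _ _ hcyc')
            intro ar har
            have h1 := Finset.mem_filter.1 har
            simp only [if_neg hi'] at h1
            have hx1 : ar.1 ∉ X := by
              intro hc
              simp [if_pos hc] at h1
            obtain ⟨hhyb, -, -⟩ := hmemA1 _ h1.1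
            rcases mem_hyb.1 hhyb with ⟨hFa, -⟩ | ⟨-, h2⟩
            · exact hFa
            · exact absurd h2 hx1
      exact this i hcyc
    · refine fun hcyc => hF.2 i (Relation.TransGen.mono (arcRel_mono ?_) _ _ hcyc)
      intro ar har
      have h1 := Finset.mem_filter.1 har
      simp only [if_neg hi] at h1
      have hx1 : ar.1 ∉ S := by
        intro hc
        simp [if_pos hc] at h1
      rcases mem_hyb.1 h1.1 with ⟨hFa, -⟩ | ⟨-, h2⟩
      · exact hFa
      · exact absurd (hXS _ h2) hx1

end XFacts

section XFacts2
set_option linter.unusedSectionVars false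

variable {v : α → α → ℝ} {E F G : Finset (α × α)} {x w : α}

lemma rootSet_hybGF_eq (hF : IsEForest F) (hxw : (x, w) ∈ G)
    (hmax : ∀ z, IsCross F G z → Relation.ReflTransGen (arcRel G) z x → z = x) :
    rootSet (hyb G F (anc G x)) =
      if rootFn F x ∈ anc G x then insert (rootFn F x) (rootSet G) else rootSet G := by
  set X := anc G x with hX
  set a := rootFn F x with ha
  rw [rootSet_hyb]
  have h1 : (rootSet G).filter (fun i => i ∉ X) = rootSet G := by
    apply Finset.filter_true_of_mem
    intro i hi hiX
    exact anc_no_Groot hxw hiX hi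
  have h2 : (rootSet F).filter (fun i => i ∈ X) = if a ∈ X then {a} else ∅ := by
    ext l
    simp only [Finset.mem_filter]
    split
    · rename_i haX
      simp only [Finset.mem_singleton]
      constructor
      · rintro ⟨hl, hlX⟩
        have := anc_rootFn hF hmax l hlX
        rw [rootFn_root hF hl] at this
        exact this
      · rintro rfl
        exact ⟨rootFn_mem hF x, haX⟩
    · rename_i haX
      simp only [Finset.notMem_empty, iff_false, not_and]
      intro hl hlX
      have := anc_rootFn hF hmax l hlX
      rw [rootFn_root hF hl] at this
      exact haX (by rw [ha, ← this]; exact hlX)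
  rw [h1, h2]
  split
  · rw [Finset.union_comm, Finset.insert_eq]
  · rw [Finset.union_empty]

lemma rootSet_hybFG_eq (hF : IsEForest F) (hxw : (x, w) ∈ G)
    (hmax : ∀ z, IsCross F G z → Relation.ReflTransGen (arcRel G) z x → z = x) :
    rootSet (hyb F G (anc G x)) =
      if rootFn F x ∈ anc G x then (rootSet F).erase (rootFn F x) else rootSet F := by
  set X := anc G x with hX
  set a := rootFn F x with ha
  rw [rootSet_hyb]
  have h1 : (rootSet G).filter (fun i => i ∈ X) = ∅ := by
    rw [Finset.filter_eq_empty_iff]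
    intro i hi hiX
    exact anc_no_Groot hxw hiX hi
  rw [h1, Finset.union_empty]
  ext l
  simp only [Finset.mem_filter]
  split
  · rename_i haX
    simp only [Finset.mem_erase]
    constructor
    · rintro ⟨hl, hlX⟩
      refine ⟨fun hla => hlX (hla ▸ haX), hl⟩
    · rintro ⟨hla, hl⟩
      refine ⟨hl, fun hlX => hla ?_⟩
      have := anc_rootFn hF hmax l hlX
      rw [rootFn_root hF hl] at this
      exact this
  · rename_i haX
    constructor
    · rintro ⟨hl, -⟩; exact hl
    · intro hl
      refine ⟨hl, fun hlX => ?_⟩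
      have := anc_rootFn hF hmax l hlX
      rw [rootFn_root hF hl] at this
      exact haX (by rw [ha, ← this]; exact hlX)

/-- The inner tree `T'` used in the terminal case `a ∈ X`. -/
noncomputable def innerT (F G : Finset (α × α)) (S X : Finset α) (x : α) :
    Finset (α × α) :=
  (F.filter (fun ar => ar.1 ∈ S ∧ ar.1 ∉ X)) ∪ (G.filter (fun ar => ar.1 ∈ X ∧ ar.1 ≠ x))

lemma mem_innerT {S X : Finset α} {ar : α × α} :
    ar ∈ innerT F G S X x ↔
      (ar ∈ F ∧ ar.1 ∈ S ∧ ar.1 ∉ X) ∨ (ar ∈ G ∧ ar.1 ∈ X ∧ ar.1 ≠ x) := by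
  simp [innerT, Finset.mem_union, Finset.mem_filter]

/-- Decomposition of the hybrid `F[X←g]` into the out-of-`S` part of `F` and a
circle tree on `S`, in the case `a ∈ X`. -/
lemma hybFG_decomp (hF : IsEForest F) (hG : IsEForest G) (hxw : (x, w) ∈ G)
    (hmax : ∀ z, IsCross F G z → Relation.ReflTransGen (arcRel G) z x → z = x)
    (hXS : ∀ u ∈ anc G x, u ∈ treeVerts F (rootFn F x)) :
    hyb F G (anc G x) =
      (F.filter (fun ar => ar.1 ∉ treeVerts F (rootFn F x))) ∪
        insert (x, w) (innerT F G (treeVerts F (rootFn F x)) (anc G x) x) := by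
  set X := anc G x
  set S := treeVerts F (rootFn F x)
  ext ar
  simp only [mem_hyb, Finset.mem_union, Finset.mem_insert, mem_innerT, Finset.mem_filter]
  constructor
  · rintro (⟨h1, h2⟩ | ⟨h1, h2⟩)
    · by_cases hS : ar.1 ∈ S
      · exact Or.inr (Or.inr (Or.inl ⟨h1, hS, h2⟩))
      · exact Or.inl ⟨h1, hS⟩
    · by_cases hx : ar.1 = x
      · have har2 : ar.2 = w := hG.1 _ _ _ (by rw [← hx]; exact h1) hxw
        have : ar = (x, w) := by
          rw [← hx, ← har2]
        exact Or.inr (Or.inl this)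
      · exact Or.inr (Or.inr (Or.inr ⟨h1, h2, hx⟩))
  · rintro (⟨h1, h2⟩ | rfl | ⟨h1, h2, h3⟩ | ⟨h1, h2, h3⟩)
    · left
      exact ⟨h1, fun hX => h2 (hXS _ hX)⟩
    · right
      exact ⟨hxw, self_mem_anc⟩
    · exact Or.inl ⟨h1, h3⟩
    · exact Or.inr ⟨h1, h2⟩

end XFacts2

section InnerTree
set_option linter.unusedSectionVars false

variable {v : α → α → ℝ} {E F G : Finset (α × α)} {x w : α}

lemma innerT_isTreeOn (hF : IsEForest F) (hG : IsEForest G)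
    (hFE : F ⊆ E) (hGE : G ⊆ E)
    (hxw : (x, w) ∈ G) (hcross : rootFn F w ≠ rootFn F x)
    (hmax : ∀ z, IsCross F G z → Relation.ReflTransGen (arcRel G) z x → z = x)
    (haX : rootFn F x ∈ anc G x) :
    IsTreeOn E (innerT F G (treeVerts F (rootFn F x)) (anc G x) x)
      (treeVerts F (rootFn F x)) x := by
  set X := anc G x with hXdef
  set a := rootFn F x with hadef
  set S := treeVerts F a with hSdef
  have haR : a ∈ rootSet F := rootFn_mem hF x
  have hXS : ∀ u ∈ X, u ∈ S := by
    intro u hu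
    rw [hSdef, mem_treeVerts_iff_rootFn hF haR]
    exact anc_rootFn hF hmax u hu
  have hxS : x ∈ S := by
    rw [hSdef, mem_treeVerts_iff_rootFn hF haR]
  have harc_S : ∀ i j, (i, j) ∈ F → (i ∈ S ↔ j ∈ S) := by
    intro i j hij
    rw [hSdef, mem_treeVerts_iff_rootFn hF haR, mem_treeVerts_iff_rootFn hF haR,
      rootFn_arc hF hij]
  -- stage 1 of reachability
  have stage1 : ∀ u, Relation.ReflTransGen (arcRel G) u x →
      Relation.ReflTransGen (arcRel (innerT F G S X x)) u x := by
    intro u hu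
    induction hu using Relation.ReflTransGen.head_induction_on with
    | refl => exact Relation.ReflTransGen.refl
    | @head u' c huc hcx ih =>
      have hcX : c ∈ X := mem_anc.2 hcx
      have hu'X : u' ∈ X := anc_closure huc hcX
      by_cases hu'x : u' = x
      · exfalso
        subst hu'x
        have hcw : c = w := hG.1 _ _ _ huc hxw
        subst hcw
        exact hcross (anc_rootFn hF hmax c hcX)
      · refine Relation.ReflTransGen.head ?_ ih
        exact mem_innerT.2 (Or.inr ⟨huc, hu'X, hu'x⟩)
  refine ⟨hxS, ?_, ?_, ?_, ?_, ?_⟩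
  · intro ar har
    rcases mem_innerT.1 har with ⟨h1, -, -⟩ | ⟨h1, -, -⟩
    · exact hFE h1
    · exact hGE h1
  · rintro ⟨i, j⟩ har
    rcases mem_innerT.1 har with ⟨h1, h2, -⟩ | ⟨h1, h2, h3⟩
    · exact ⟨h2, (harc_S i j h1).1 h2⟩
    · exact ⟨hXS _ h2, hXS _ (anc_intree hG h1 h2 h3)⟩
  · intro i hiS hix
    by_cases hiX : i ∈ X
    · obtain ⟨c, hc⟩ : ∃ c, (i, c) ∈ G := by
        rcases Relation.reflTransGen_iff_eq_or_transGen.1 (mem_anc.1 hiX) with rfl | ht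
        · exact absurd rfl hix
        · rcases (Relation.TransGen.head'_iff).1 ht with ⟨c, hic, -⟩
          exact ⟨c, hic⟩
      refine ⟨c, mem_innerT.2 (Or.inr ⟨hc, hiX, hix⟩), ?_⟩
      intro j hj
      rcases mem_innerT.1 hj with ⟨-, -, h3⟩ | ⟨h1, -, -⟩
      · exact absurd hiX h3
      · exact hG.1 _ _ _ h1 hc
    · have hia : i ≠ a := fun hia => hiX (hia ▸ haX)
      obtain ⟨c, hc⟩ : ∃ c, (i, c) ∈ F := by
        have := mem_treeVerts.1 (hSdef ▸ hiS)
        rcases Relation.reflTransGen_iff_eq_or_transGen.1 this with rfl | ht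
        · exact absurd rfl hia
        · rcases (Relation.TransGen.head'_iff).1 ht with ⟨c, hic, -⟩
          exact ⟨c, hic⟩
      refine ⟨c, mem_innerT.2 (Or.inl ⟨hc, hiS, hiX⟩), ?_⟩
      intro j hj
      rcases mem_innerT.1 hj with ⟨h1, -, -⟩ | ⟨-, h2, -⟩
      · exact hF.1 _ _ _ h1 hc
      · exact absurd h2 hiX
  · intro j hj
    rcases mem_innerT.1 hj with ⟨-, -, h3⟩ | ⟨-, -, h3⟩
    · exact h3 (hXdef ▸ self_mem_anc)
    · exact h3 rfl
  · intro i hiS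
    have hrtg : Relation.ReflTransGen (arcRel F) i a := mem_treeVerts.1 (hSdef ▸ hiS)
    clear hiS
    induction hrtg using Relation.ReflTransGen.head_induction_on with
    | refl => exact stage1 a (mem_anc.1 haX)
    | @head i' c hic hca ih =>
      by_cases hi'X : i' ∈ X
      · exact stage1 i' (mem_anc.1 hi'X)
      · have hi'S : i' ∈ S := by
          rw [hSdef, mem_treeVerts_iff_rootFn hF haR]
          exact rootFn_rtg_eq hF (Relation.ReflTransGen.head hic hca) |>.trans
            (rootFn_root hF haR)
        refine Relation.ReflTransGen.head ?_ ih
        exact mem_innerT.2 (Or.inl ⟨hic, hi'S, hi'X⟩)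

end InnerTree

section MainLower
set_option linter.unusedSectionVars false

variable {v : α → α → ℝ} {E F G : Finset (α × α)} {k : ℕ}

lemma lower_main (hFmin : IsMinForest v E k F) (hk1 : 1 ≤ k) :
    ∀ n : ℕ, ∀ G, G ∈ FSet E (k - 1) → (G \ F).card ≤ n →
      ∃ a ∈ rootSet F, phi v E k +
        (lamCirc v E (treeVerts F a) - lamBul v E (treeVerts F a)) ≤ (aweight v G : EReal) := by
  obtain ⟨hFk, hphiF⟩ := hFmin
  obtain ⟨hFE, hFor, hcardF⟩ := hFk
  intro n
  induction n with
  | zero =>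
    intro G hGk hn
    exfalso
    obtain ⟨hGE, hGor, hcardG⟩ := hGk
    have hlt : (rootSet G).card < (rootSet F).card := by
      rw [hcardF, hcardG]; omega
    obtain ⟨x, ⟨w, hxw, hcross⟩, hmax⟩ := exists_min_cross hFor hGor hlt
    have hxwGF : (x, w) ∈ G \ F := by
      rw [Finset.mem_sdiff]
      exact ⟨hxw, fun h => hcross (rootFn_arc hFor h).symm⟩
    have := Finset.card_pos.2 ⟨_, hxwGF⟩
    omega
  | succ n ih =>
    intro G hGk hn
    obtain ⟨hGE, hGor, hcardG⟩ := hGk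
    have hlt : (rootSet G).card < (rootSet F).card := by
      rw [hcardF, hcardG]; omega
    obtain ⟨x, ⟨w, hxw, hcross⟩, hmax⟩ := exists_min_cross hFor hGor hlt
    have hxwGF : (x, w) ∈ G \ F := by
      rw [Finset.mem_sdiff]
      exact ⟨hxw, fun h => hcross (rootFn_arc hFor h).symm⟩
    set X := anc G x with hXdef
    set a := rootFn F x with hadef
    set S := treeVerts F a with hSdef
    have haR : a ∈ rootSet F := rootFn_mem hFor x
    have hXS : ∀ u ∈ X, u ∈ S := by
      intro u hu
      rw [hSdef, mem_treeVerts_iff_rootFn hFor haR]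
      exact anc_rootFn hFor hmax u hu
    have hxS : x ∈ S := by
      rw [hSdef, mem_treeVerts_iff_rootFn hFor haR]
    have hwS : w ∉ S := by
      rw [hSdef, mem_treeVerts_iff_rootFn hFor haR]
      exact hcross
    by_cases haX : a ∈ X
    · -- terminal case: the hybrid G₂ = F[X ← G] is circle-tree-shaped on S
      refine ⟨a, haR, ?_⟩
      set C := insert (x, w) (innerT F G S X x) with hCdef
      have hCtails : ∀ ar ∈ C, ar.1 ∈ S := by
        intro ar har
        rcases Finset.mem_insert.1 har with rfl | h
        · exact hxS
        · rcases mem_innerT.1 h with ⟨-, h2, -⟩ | ⟨-, h2, -⟩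
          · exact h2
          · exact hXS _ h2
      have hG₂mem : hyb F G X ∈ FSet E (k - 1) := by
        refine ⟨hyb_subset hFE hGE, ⟨hyb_outdeg hFor.1 hGor.1,
          hybFG_acyclic hFor hGor hxw hcross hmax⟩, ?_⟩
        rw [rootSet_hybFG_eq hFor hxw hmax, if_pos haX, Finset.card_erase_of_mem haR, hcardF]
      have hF₂mem : hyb G F X ∈ FSet E k := by
        refine ⟨hyb_subset hGE hFE, ⟨hyb_outdeg hGor.1 hFor.1,
          hybGF_acyclic hFor hGor⟩, ?_⟩
        rw [rootSet_hybGF_eq hFor hxw hmax, if_pos haX,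
          Finset.card_insert_of_notMem (anc_no_Groot hxw haX), hcardG]
        omega
      have hcons : aweight v (hyb F G X) + aweight v (hyb G F X) =
          aweight v F + aweight v G := aweight_hyb_add
      have hF₂ge : aweight v F ≤ aweight v (hyb G F X) := by
        have h1 : phi v E k ≤ (aweight v (hyb G F X) : EReal) := minW_le hF₂mem
        rw [← hphiF] at h1
        exact_mod_cast h1
      have hG₂le : aweight v (hyb F G X) ≤ aweight v G := by linarith
      have hdecomp := hybFG_decomp hFor hGor hxw hmax hXS
      have hWG₂ : aweight v (hyb F G X) =
          aweight v (F.filter (fun ar => ar.1 ∉ S)) + aweight v C := by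
        rw [hdecomp]
        apply aweight_union_of_disjoint
        rw [Finset.disjoint_left]
        intro ar har hC
        exact (Finset.mem_filter.1 har).2 (hCtails ar hC)
      have hWF : aweight v (F.filter (fun ar => ar.1 ∉ S)) + aweight v (treeArcs F a)
          = aweight v F := aweight_treeArcs_split
      have hCT : IsCTreeOn E C S x :=
        ⟨w, hwS, innerT F G S X x,
          innerT_isTreeOn hFor hGor hFE hGE hxw hcross hmax haX, hGE hxw, rfl⟩
      have hlamC : lamCirc v E S ≤ (aweight v C : EReal) := minW_le ⟨x, hxS, hCT⟩
      have hlamB : lamBul v E S = (aweight v (treeArcs F a) : EReal) :=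
        lamBul_eq ⟨⟨hFE, hFor, hcardF⟩, hphiF⟩ haR
      calc phi v E k + (lamCirc v E S - lamBul v E S)
          ≤ (aweight v F : EReal) +
            ((aweight v C : EReal) - (aweight v (treeArcs F a) : EReal)) := by
            refine add_le_add (le_of_eq hphiF.symm) ?_
            exact EReal.sub_le_sub hlamC (le_of_eq hlamB.symm)
        _ = ((aweight v F - aweight v (treeArcs F a) + aweight v C : ℝ) : EReal) := by
            rw [← EReal.coe_sub, ← EReal.coe_add]; norm_cast; ring
        _ = ((aweight v (hyb F G X) : ℝ) : EReal) := by
            norm_cast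
            linarith
        _ ≤ ((aweight v G : ℝ) : EReal) := by exact_mod_cast hG₂le
    · -- recursive case
      have hG₂mem : hyb G F X ∈ FSet E (k - 1) := by
        refine ⟨hyb_subset hGE hFE, ⟨hyb_outdeg hGor.1 hFor.1,
          hybGF_acyclic hFor hGor⟩, ?_⟩
        rw [rootSet_hybGF_eq hFor hxw hmax, if_neg haX, hcardG]
      have hF₂mem : hyb F G X ∈ FSet E k := by
        refine ⟨hyb_subset hFE hGE, ⟨hyb_outdeg hFor.1 hGor.1,
          hybFG_acyclic hFor hGor hxw hcross hmax⟩, ?_⟩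
        rw [rootSet_hybFG_eq hFor hxw hmax, if_neg haX, hcardF]
      have hmeas : (hyb G F X \ F).card < (G \ F).card := by
        apply Finset.card_lt_card
        rw [Finset.ssubset_iff_of_subset]
        · refine ⟨(x, w), hxwGF, ?_⟩
          rw [Finset.mem_sdiff]
          rintro ⟨h1, h2⟩
          rcases mem_hyb.1 h1 with ⟨-, h3⟩ | ⟨h3, -⟩
          · exact h3 self_mem_anc
          · exact h2 h3
        · intro ar har
          rw [Finset.mem_sdiff] at har ⊢
          rcases mem_hyb.1 har.1 with ⟨h1, -⟩ | ⟨h1, -⟩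
          · exact ⟨h1, har.2⟩
          · exact absurd h1 har.2
      have hcons : aweight v (hyb G F X) + aweight v (hyb F G X) =
          aweight v G + aweight v F := aweight_hyb_add
      have hF₂ge : aweight v F ≤ aweight v (hyb F G X) := by
        have h1 : phi v E k ≤ (aweight v (hyb F G X) : EReal) := minW_le hF₂mem
        rw [← hphiF] at h1
        exact_mod_cast h1
      have hG₂le : aweight v (hyb G F X) ≤ aweight v G := by linarith
      obtain ⟨a', ha', hbound⟩ := ih (hyb G F X) hG₂mem (by omega)
      refine ⟨a', ha', hbound.trans ?_⟩
      exact_mod_cast hG₂le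

end MainLower

/-- Corollary 1.  If `F ∈ 𝓕̃^k` and `𝓕^{k-1} ≠ ∅`, then
`φ^{k-1} - φ^k = min_{l ∈ K_F} (λ^∘_{V(T^F_l)} - λ^•_{V(T^F_l)})`. -/
theorem statement4 (v : α → α → ℝ) (E : Finset (α × α)) (hE : ∀ i, (i, i) ∉ E)
    (k : ℕ) (hk : 1 ≤ k) (F : Finset (α × α)) (hF : IsMinForest v E k F)
    (hne : (FSet E (k - 1)).Nonempty) :
    phi v E (k - 1) - phi v E k =
      ⨅ l ∈ rootSet F, (lamCirc v E (treeVerts F l) - lamBul v E (treeVerts F l)) := by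
  set M : EReal := ⨅ l ∈ rootSet F,
    (lamCirc v E (treeVerts F l) - lamBul v E (treeVerts F l)) with hM
  have hBcoe : phi v E k = ((aweight v F : ℝ) : EReal) := hF.2.symm
  have hBne_bot : phi v E k ≠ ⊥ := by rw [hBcoe]; exact EReal.coe_ne_bot _
  have hBne_top : phi v E k ≠ ⊤ := by rw [hBcoe]; exact EReal.coe_ne_top _
  apply le_antisymm
  · -- ≤ : from the circle-tree surgery
    apply le_iInf₂
    intro l hl
    have h1 := phi_pred_le hF hl
    rw [EReal.sub_le_iff_le_add (Or.inl hBne_bot) (Or.inl hBne_top)]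
    calc phi v E (k - 1)
        ≤ phi v E k + (lamCirc v E (treeVerts F l) - lamBul v E (treeVerts F l)) := h1
      _ = (lamCirc v E (treeVerts F l) - lamBul v E (treeVerts F l)) + phi v E k := by
          rw [add_comm]
  · -- ≥ : from the lower bound on every (k-1)-forest
    rw [EReal.le_sub_iff_add_le (Or.inl hBne_bot) (Or.inl hBne_top)]
    have key : ∀ G ∈ FSet E (k - 1), M + phi v E k ≤ (aweight v G : EReal) := by
      intro G hG
      obtain ⟨a, haR, hbound⟩ := lower_main hF hk (G \ F).card G hG le_rfl
      refine le_trans ?_ hbound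
      rw [add_comm]
      gcongr
      exact iInf₂_le a haR
    exact le_minW key
end BarrierForests
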